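/- Let S be a shape and let σ be any finite sequence of full doubling operations (each an east full doubling D_E or a north full doubling D_N) containing exactly l east operations and exactly k north operations. Then the shape obtained by applying σ (in order) to S equals F_{l,k}(S). -/

import Mathlib

/-- Minimum first coordinate of a shape (0 for the empty set). -/
def xmin (S : Finset (ℤ × ℤ)) : ℤ := WithTop.untopD 0 ((S.image Prod.fst).min)

/-- Minimum second coordinate of a shape (0 for the empty set). -/
def ymin (S : Finset (ℤ × ℤ)) : ℤ := WithTop.untopD 0 ((S.image Prod.snd).min)

/-- East full doubling. -/
def DE (S : Finset (ℤ × ℤ)) : Finset (ℤ × ℤ) :=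
  S.image (fun p => (2 * p.1 - xmin S, p.2)) ∪
    S.image (fun p => (2 * p.1 - xmin S + 1, p.2))

/-- North full doubling. -/
def DN (S : Finset (ℤ × ℤ)) : Finset (ℤ × ℤ) :=
  S.image (fun p => (p.1, 2 * p.2 - ymin S)) ∪
    S.image (fun p => (p.1, 2 * p.2 - ymin S + 1))

/-- Apply a sequence of full doubling operations (`true` = east, `false` = north),
in order (head of the list first). -/
def applySeq (σ : List Bool) (S : Finset (ℤ × ℤ)) : Finset (ℤ × ℤ) :=
  σ.foldl (fun T b => if b then DE T else DN T) S

/-- The (p,q)-rectangle around an integer point. -/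
noncomputable def Rec2 (u : ℤ × ℤ) (p q : ℕ) : Finset (ℤ × ℤ) :=
  Finset.Icc u.1 (u.1 + (p : ℤ) - 1) ×ˢ Finset.Icc u.2 (u.2 + (q : ℤ) - 1)

/-- The reconfiguration function `F_{l,k}`. -/
noncomputable def F (l k : ℕ) (S : Finset (ℤ × ℤ)) : Finset (ℤ × ℤ) :=
  S.biUnion fun p =>
    Rec2 (p.1 + ((2 : ℤ) ^ l - 1) * (p.1 - xmin S),
          p.2 + ((2 : ℤ) ^ k - 1) * (p.2 - ymin S)) (2 ^ l) (2 ^ k)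

/-- Two grid points are adjacent if they are at orthogonal distance 1. -/
def Adj (u v : ℤ × ℤ) : Prop := (u.1 - v.1).natAbs + (u.2 - v.2).natAbs = 1

/-- A shape is connected if any two of its points are joined by a path of
adjacent points inside the shape. -/
def ShapeConnected (S : Finset (ℤ × ℤ)) : Prop :=
  ∀ u ∈ S, ∀ v ∈ S,
    Relation.ReflTransGen (fun a b => a ∈ S ∧ b ∈ S ∧ Adj a b) u v

/-- `wD D x` is the number of elements of `D` strictly west of `x`. -/
def wD (D : Finset ℤ) (x : ℤ) : ℕ := (D.filter (· < x)).card

/-- East RC doubling of `S` with doubled column set `D`. -/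
def RCE (S : Finset (ℤ × ℤ)) (D : Finset ℤ) : Finset (ℤ × ℤ) :=
  S.image (fun p => (p.1 + (wD D p.1 : ℤ), p.2)) ∪
    (S.filter fun p => p.1 ∈ D).image fun p => (p.1 + (wD D p.1 : ℤ) + 1, p.2)

/-- North RC doubling of `S` with doubled row set `D`. -/
def RCN (S : Finset (ℤ × ℤ)) (D : Finset ℤ) : Finset (ℤ × ℤ) :=
  S.image (fun p => (p.1, p.2 + (wD D p.2 : ℤ))) ∪
    (S.filter fun p => p.2 ∈ D).image fun p => (p.1, p.2 + (wD D p.2 : ℤ) + 1)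

/-- `D` is an admissible doubled column set for `S`. -/
def eastAdmissible (S : Finset (ℤ × ℤ)) (D : Finset ℤ) : Prop :=
  D.Nonempty ∧ ∀ d ∈ D, ∃ y, (d, y) ∈ S

/-- `D` is an admissible doubled row set for `S`. -/
def northAdmissible (S : Finset (ℤ × ℤ)) (D : Finset ℤ) : Prop :=
  D.Nonempty ∧ ∀ d ∈ D, ∃ x, (x, d) ∈ S

/-- One east or north RC doubling step. -/
def RCStep (S T : Finset (ℤ × ℤ)) : Prop :=
  ∃ D : Finset ℤ,
    (eastAdmissible S D ∧ T = RCE S D) ∨ (northAdmissible S D ∧ T = RCN S D)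

/-- One single column or single row doubling step (an RC step with `|D| = 1`). -/
def SingleStep (S T : Finset (ℤ × ℤ)) : Prop :=
  ∃ D : Finset ℤ, D.card = 1 ∧
    ((eastAdmissible S D ∧ T = RCE S D) ∨ (northAdmissible S D ∧ T = RCN S D))

/-- Translate a shape by a vector. -/
def translateSh (v : ℤ × ℤ) (S : Finset (ℤ × ℤ)) : Finset (ℤ × ℤ) :=
  S.image fun p => (p.1 + v.1, p.2 + v.2)

/-- Single east column doubling at column `d`. -/
def oE (d : ℤ) (T : Finset (ℤ × ℤ)) : Finset (ℤ × ℤ) :=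
  (T.filter fun p => p.1 ≤ d) ∪ (T.filter fun p => d ≤ p.1).image fun p => (p.1 + 1, p.2)

/-- The column of `S` at `x`. -/
def colS (S : Finset (ℤ × ℤ)) (x : ℤ) : Finset ℤ := (S.filter fun p => p.1 = x).image Prod.snd

/-- The row of `S` at `y`. -/
def rowS (S : Finset (ℤ × ℤ)) (y : ℤ) : Finset ℤ := (S.filter fun p => p.2 = y).image Prod.fst

/-- `phiC S x` counts the column changes of `S` in the interval `(xmin S, x]`. -/
noncomputable def phiC (S : Finset (ℤ × ℤ)) (x : ℤ) : ℕ :=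
  ((Finset.Icc (xmin S + 1) x).filter fun x' => colS S x' ≠ colS S (x' - 1)).card

/-- `phiR S y` counts the row changes of `S` in the interval `(ymin S, y]`. -/
noncomputable def phiR (S : Finset (ℤ × ℤ)) (y : ℤ) : ℕ :=
  ((Finset.Icc (ymin S + 1) y).filter fun y' => rowS S y' ≠ rowS S (y' - 1)).card

/-- Column compression of a shape. -/
noncomputable def KC (S : Finset (ℤ × ℤ)) : Finset (ℤ × ℤ) := S.image fun p => ((phiC S p.1 : ℤ), p.2)

/-- Row compression of a shape. -/
noncomputable def KR (S : Finset (ℤ × ℤ)) : Finset (ℤ × ℤ) := S.image fun p => (p.1, (phiR S p.2 : ℤ))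

/-- The baseline shape of `S`. -/
noncomputable def Baseline (S : Finset (ℤ × ℤ)) : Finset (ℤ × ℤ) := KR (KC S)

/-- Number of distinct consecutive columns of `S`. -/
noncomputable def mC (S : Finset (ℤ × ℤ)) : ℕ := (S.image Prod.fst).sup (phiC S) + 1

/-- Number of distinct consecutive rows of `S`. -/
noncomputable def mR (S : Finset (ℤ × ℤ)) : ℕ := (S.image Prod.snd).sup (phiR S) + 1

/-- Consecutive multiplicity of the `i`-th distinct column of `S`. -/
noncomputable def MC (S : Finset (ℤ × ℤ)) (i : ℕ) : ℕ := ((S.image Prod.fst).filter fun x => phiC S x = i).card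

/-- Consecutive multiplicity of the `i`-th distinct row of `S`. -/
noncomputable def MR (S : Finset (ℤ × ℤ)) (i : ℕ) : ℕ := ((S.image Prod.snd).filter fun y => phiR S y = i).card

/-- The four unit directions. -/
def dirs : Finset (ℤ × ℤ) := {(1, 0), (-1, 0), (0, 1), (0, -1)}

/-- One node-addition growth step: a direction `d` is fixed and every new node is
generated at a position `p + d` for an existing node `p`. -/
def AddStep (S T : Finset (ℤ × ℤ)) : Prop :=
  ∃ d ∈ dirs, S ⊆ T ∧ T ⊆ S ∪ S.image (fun p => (p.1 + d.1, p.2 + d.2))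

lemma xmin_eq_of (S : Finset (ℤ × ℤ)) (a : ℤ) (h1 : ∃ p ∈ S, p.1 = a)
    (h2 : ∀ p ∈ S, a ≤ p.1) : xmin S = a := by
  obtain ⟨p, hp, hpa⟩ := h1
  have : (S.image Prod.fst).min = (a : WithTop ℤ) := by
    apply le_antisymm
    · exact Finset.min_le (Finset.mem_image.2 ⟨p, hp, hpa⟩)
    · exact Finset.le_min (fun b hb => by
        obtain ⟨q, hq, hqb⟩ := Finset.mem_image.1 hb
        exact_mod_cast hqb ▸ h2 q hq)
  simp [xmin, this]

lemma ymin_eq_of (S : Finset (ℤ × ℤ)) (b : ℤ) (h1 : ∃ p ∈ S, p.2 = b)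
    (h2 : ∀ p ∈ S, b ≤ p.2) : ymin S = b := by
  obtain ⟨p, hp, hpb⟩ := h1
  have : (S.image Prod.snd).min = (b : WithTop ℤ) := by
    apply le_antisymm
    · exact Finset.min_le (Finset.mem_image.2 ⟨p, hp, hpb⟩)
    · exact Finset.le_min (fun c hc => by
        obtain ⟨q, hq, hqc⟩ := Finset.mem_image.1 hc
        exact_mod_cast hqc ▸ h2 q hq)
  simp [ymin, this]

lemma xmin_exists (S : Finset (ℤ × ℤ)) (hS : S.Nonempty) : ∃ p ∈ S, p.1 = xmin S := by
  have hne : (S.image Prod.fst).Nonempty := hS.image _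
  have h := Finset.min'_mem _ hne
  obtain ⟨p, hp, hpe⟩ := Finset.mem_image.1 h
  refine ⟨p, hp, ?_⟩
  rw [hpe, xmin, ← Finset.coe_min' hne]
  rfl

lemma xmin_le (S : Finset (ℤ × ℤ)) {p : ℤ × ℤ} (hp : p ∈ S) : xmin S ≤ p.1 := by
  have hne : (S.image Prod.fst).Nonempty := ⟨p.1, Finset.mem_image.2 ⟨p, hp, rfl⟩⟩
  have h := Finset.min'_le _ p.1 (Finset.mem_image.2 ⟨p, hp, rfl⟩)
  rw [xmin, ← Finset.coe_min' hne]
  exact h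

lemma ymin_exists (S : Finset (ℤ × ℤ)) (hS : S.Nonempty) : ∃ p ∈ S, p.2 = ymin S := by
  have hne : (S.image Prod.snd).Nonempty := hS.image _
  have h := Finset.min'_mem _ hne
  obtain ⟨p, hp, hpe⟩ := Finset.mem_image.1 h
  refine ⟨p, hp, ?_⟩
  rw [hpe, ymin, ← Finset.coe_min' hne]
  rfl

lemma ymin_le (S : Finset (ℤ × ℤ)) {p : ℤ × ℤ} (hp : p ∈ S) : ymin S ≤ p.2 := by
  have hne : (S.image Prod.snd).Nonempty := ⟨p.2, Finset.mem_image.2 ⟨p, hp, rfl⟩⟩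
  have h := Finset.min'_le _ p.2 (Finset.mem_image.2 ⟨p, hp, rfl⟩)
  rw [ymin, ← Finset.coe_min' hne]
  exact h

lemma xmin_DE (S : Finset (ℤ × ℤ)) (hS : S.Nonempty) : xmin (DE S) = xmin S := by
  apply xmin_eq_of
  · obtain ⟨p, hp, hpe⟩ := xmin_exists S hS
    exact ⟨(2 * p.1 - xmin S, p.2), Finset.mem_union_left _
      (Finset.mem_image.2 ⟨p, hp, rfl⟩), by simp [hpe]; ring⟩
  · intro q hq
    rcases Finset.mem_union.1 hq with h | h <;>
      obtain ⟨p, hp, hpe⟩ := Finset.mem_image.1 h <;>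
      have := xmin_le S hp <;> subst hpe <;> simp <;> omega

lemma ymin_DE (S : Finset (ℤ × ℤ)) (hS : S.Nonempty) : ymin (DE S) = ymin S := by
  apply ymin_eq_of
  · obtain ⟨p, hp, hpe⟩ := ymin_exists S hS
    exact ⟨(2 * p.1 - xmin S, p.2), Finset.mem_union_left _
      (Finset.mem_image.2 ⟨p, hp, rfl⟩), hpe⟩
  · intro q hq
    rcases Finset.mem_union.1 hq with h | h <;>
      obtain ⟨p, hp, hpe⟩ := Finset.mem_image.1 h <;>
      have := ymin_le S hp <;> subst hpe <;> simpa

lemma xmin_DN (S : Finset (ℤ × ℤ)) (hS : S.Nonempty) : xmin (DN S) = xmin S := by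
  apply xmin_eq_of
  · obtain ⟨p, hp, hpe⟩ := xmin_exists S hS
    exact ⟨(p.1, 2 * p.2 - ymin S), Finset.mem_union_left _
      (Finset.mem_image.2 ⟨p, hp, rfl⟩), hpe⟩
  · intro q hq
    rcases Finset.mem_union.1 hq with h | h <;>
      obtain ⟨p, hp, hpe⟩ := Finset.mem_image.1 h <;>
      have := xmin_le S hp <;> subst hpe <;> simpa

lemma ymin_DN (S : Finset (ℤ × ℤ)) (hS : S.Nonempty) : ymin (DN S) = ymin S := by
  apply ymin_eq_of
  · obtain ⟨p, hp, hpe⟩ := ymin_exists S hS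
    exact ⟨(p.1, 2 * p.2 - ymin S), Finset.mem_union_left _
      (Finset.mem_image.2 ⟨p, hp, rfl⟩), by simp [hpe]; ring⟩
  · intro q hq
    rcases Finset.mem_union.1 hq with h | h <;>
      obtain ⟨p, hp, hpe⟩ := Finset.mem_image.1 h <;>
      have := ymin_le S hp <;> subst hpe <;> simp <;> omega

lemma one_le_two_pow_c (n : ℕ) : (1 : ℤ) ≤ 2 ^ n := by
  have := pow_pos (by norm_num : (0:ℤ) < 2) n; omega
lemma unused_aux (n : ℕ) : (0 : ℤ) < 2 ^ n := pow_pos (by norm_num : (0:ℤ) < 2) n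

lemma Rec2_union_E (A B : ℤ) (l q : ℕ) :
    Rec2 (A, B) (2 ^ l) q ∪ Rec2 (A + 2 ^ l, B) (2 ^ l) q = Rec2 (A, B) (2 ^ (l + 1)) q := by
  ext ⟨u, v⟩
  simp only [Rec2, Finset.mem_union, Finset.mem_product, Finset.mem_Icc]
  have h1 : (1 : ℤ) ≤ 2 ^ l := one_le_two_pow_c _
  push_cast [pow_succ]
  generalize (2 : ℤ) ^ l = c at *
  omega

lemma Rec2_union_N (A B : ℤ) (k p : ℕ) :
    Rec2 (A, B) p (2 ^ k) ∪ Rec2 (A, B + 2 ^ k) p (2 ^ k) = Rec2 (A, B) p (2 ^ (k + 1)) := by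
  ext ⟨u, v⟩
  simp only [Rec2, Finset.mem_union, Finset.mem_product, Finset.mem_Icc]
  have h1 : (1 : ℤ) ≤ 2 ^ k := one_le_two_pow_c _
  push_cast [pow_succ]
  generalize (2 : ℤ) ^ k = c at *
  omega

lemma F_DE (S : Finset (ℤ × ℤ)) (hS : S.Nonempty) (l k : ℕ) :
    F l k (DE S) = F (l + 1) k S := by
  unfold F
  rw [xmin_DE S hS, ymin_DE S hS]
  ext w
  simp only [DE, Finset.mem_biUnion, Finset.mem_union, Finset.mem_image]
  constructor
  · rintro ⟨p, (⟨q, hq, rfl⟩ | ⟨q, hq, rfl⟩), hw⟩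
    · refine ⟨q, hq, ?_⟩
      rw [← Rec2_union_E]
      apply Finset.mem_union_left
      convert hw using 3 <;> push_cast [pow_succ] <;> ring
    · refine ⟨q, hq, ?_⟩
      rw [← Rec2_union_E]
      apply Finset.mem_union_right
      convert hw using 3 <;> push_cast [pow_succ] <;> ring
  · rintro ⟨q, hq, hw⟩
    rw [← Rec2_union_E] at hw
    rcases Finset.mem_union.1 hw with h | h
    · exact ⟨_, Or.inl ⟨q, hq, rfl⟩, by
        convert h using 3 <;> push_cast [pow_succ] <;> ring⟩
    · exact ⟨_, Or.inr ⟨q, hq, rfl⟩, by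
        convert h using 3 <;> push_cast [pow_succ] <;> ring⟩

lemma F_DN (S : Finset (ℤ × ℤ)) (hS : S.Nonempty) (l k : ℕ) :
    F l k (DN S) = F l (k + 1) S := by
  unfold F
  rw [xmin_DN S hS, ymin_DN S hS]
  ext w
  simp only [DN, Finset.mem_biUnion, Finset.mem_union, Finset.mem_image]
  constructor
  · rintro ⟨p, (⟨q, hq, rfl⟩ | ⟨q, hq, rfl⟩), hw⟩
    · refine ⟨q, hq, ?_⟩
      rw [← Rec2_union_N]
      apply Finset.mem_union_left
      convert hw using 3 <;> push_cast [pow_succ] <;> ring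
    · refine ⟨q, hq, ?_⟩
      rw [← Rec2_union_N]
      apply Finset.mem_union_right
      convert hw using 3 <;> push_cast [pow_succ] <;> ring
  · rintro ⟨q, hq, hw⟩
    rw [← Rec2_union_N] at hw
    rcases Finset.mem_union.1 hw with h | h
    · exact ⟨_, Or.inl ⟨q, hq, rfl⟩, by
        convert h using 3 <;> push_cast [pow_succ] <;> ring⟩
    · exact ⟨_, Or.inr ⟨q, hq, rfl⟩, by
        convert h using 3 <;> push_cast [pow_succ] <;> ring⟩

lemma F_zero (S : Finset (ℤ × ℤ)) : F 0 0 S = S := by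
  ext ⟨u, v⟩
  simp only [F, Rec2, Finset.mem_biUnion, Finset.mem_product, Finset.mem_Icc,
    pow_zero]
  constructor
  · rintro ⟨p, hp, h⟩
    norm_num at h
    obtain ⟨⟨h1, h2⟩, h3, h4⟩ := h
    have : p = (u, v) := by
      have := le_antisymm h2 h1
      have := le_antisymm h4 h3
      exact Prod.ext (by omega) (by omega)
    exact this ▸ hp
  · intro h
    exact ⟨(u, v), h, by norm_num⟩

lemma DE_nonempty (S : Finset (ℤ × ℤ)) (hS : S.Nonempty) : (DE S).Nonempty :=
  Finset.Nonempty.inr (hS.image _)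

lemma DN_nonempty (S : Finset (ℤ × ℤ)) (hS : S.Nonempty) : (DN S).Nonempty :=
  Finset.Nonempty.inr (hS.image _)

/-- applying any sequence of full doubling operations with exactly `l`
east and `k` north operations to a shape `S` yields `F_{l,k}(S)`. -/
theorem full_doubling_eq_F (S : Finset (ℤ × ℤ)) (hS : S.Nonempty)
    (l k : ℕ) (σ : List Bool)
    (hl : σ.count true = l) (hk : σ.count false = k) :
    applySeq σ S = F l k S := by
  subst hl hk
  induction σ generalizing S with
  | nil => simp [applySeq, F_zero]
  | cons b σ ih =>
    cases b
    · have h1 : applySeq (false :: σ) S = applySeq σ (DN S) := rfl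
      rw [h1, ih (DN S) (DN_nonempty S hS), F_DN S hS]
      simp [List.count_cons]
    · have h1 : applySeq (true :: σ) S = applySeq σ (DE S) := rfl
      rw [h1, ih (DE S) (DE_nonempty S hS), F_DE S hS]
      simp [List.count_cons]
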